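/- arXiv:1005.0921 — 3 statements merged into one kernel-verified Lean document; each statement's English description precedes it below -/
import Mathlib

section
/- Let (K, d_K) be a compact metric space equipped with a binary operation • : K × K → K that commutes with limits (if ρ_i → ρ and σ_i → σ in K then ρ_i • σ_i → ρ • σ). Suppose f, g ∈ K and e ∈ K satisfy f • g = e and e • x = x • e = x for all x in the closure of the sub-semigroup generated by f and g, and suppose • is associative on that closure. Then there exists a strictly increasing sequence of positive integers (i_r) such that the sequence (f^{i_{r+1} - i_r}) of positive powers of f converges to e. -/
open Filter Topology

/-- `opPow op f n` is the `(n+1)`-fold `op`-product of `f` with itself,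
i.e. `f^(n+1)`; so `opPow op f 0 = f` and `opPow op f (n+1) = op f (f^(n+1))`. -/
def opPow {K : Type*} (op : K → K → K) (f : K) : ℕ → K
  | 0 => f
  | n + 1 => op f (opPow op f n)

/-- The sub-semigroup generated by `f` and `g` under `op`. -/
def semigroupGen {K : Type*} (op : K → K → K) (f g : K) : Set K :=
  ⋂₀ {S : Set K | f ∈ S ∧ g ∈ S ∧ ∀ a ∈ S, ∀ b ∈ S, op a b ∈ S}

/-- in a compact metric space `K` with a binary operation `•`
commuting with limits, if `f • g = e`, `e` is a two-sided identity on the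
closure of the sub-semigroup generated by `f` and `g`, and `•` is associative
on that closure, then there is a strictly increasing sequence `(i_r)` of
positive integers with `f^(i_{r+1} - i_r) → e`. -/
theorem statement2 {K : Type*} [MetricSpace K] [CompactSpace K]
    (op : K → K → K)
    (hlim : ∀ (ρ σ : ℕ → K) (ρ₀ σ₀ : K), Tendsto ρ atTop (𝓝 ρ₀) →
      Tendsto σ atTop (𝓝 σ₀) →
      Tendsto (fun i => op (ρ i) (σ i)) atTop (𝓝 (op ρ₀ σ₀)))
    (f g e : K) (hfg : op f g = e)
    (hid : ∀ x ∈ closure (semigroupGen op f g), op e x = x ∧ op x e = x)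
    (hassoc : ∀ a ∈ closure (semigroupGen op f g), ∀ b ∈ closure (semigroupGen op f g),
      ∀ c ∈ closure (semigroupGen op f g), op (op a b) c = op a (op b c)) :
    ∃ i : ℕ → ℕ, StrictMono i ∧ (∀ r, 0 < i r) ∧
      Tendsto (fun r => opPow op f (i (r + 1) - i r - 1)) atTop (𝓝 e) := by
  classical
  -- basic membership facts
  have hgenf : f ∈ semigroupGen op f g := fun S hS => hS.1
  have hgeng : g ∈ semigroupGen op f g := fun S hS => hS.2.1
  have hgenop : ∀ a ∈ semigroupGen op f g, ∀ b ∈ semigroupGen op f g,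
      op a b ∈ semigroupGen op f g :=
    fun a ha b hb S hS => hS.2.2 a (ha S hS) b (hb S hS)
  have hPgen : ∀ n, opPow op f n ∈ semigroupGen op f g := by
    intro n; induction n with
    | zero => exact hgenf
    | succ n ih => exact hgenop f hgenf _ ih
  have hQgen : ∀ n, opPow op g n ∈ semigroupGen op f g := by
    intro n; induction n with
    | zero => exact hgeng
    | succ n ih => exact hgenop g hgeng _ ih
  have hPC : ∀ n, opPow op f n ∈ closure (semigroupGen op f g) :=
    fun n => subset_closure (hPgen n)
  have hQC : ∀ n, opPow op g n ∈ closure (semigroupGen op f g) :=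
    fun n => subset_closure (hQgen n)
  have hfC : f ∈ closure (semigroupGen op f g) := subset_closure hgenf
  have hgC : g ∈ closure (semigroupGen op f g) := subset_closure hgeng
  -- g-powers can be written with g on the right
  have hQright : ∀ n, opPow op g (n + 1) = op (opPow op g n) g := by
    intro n; induction n with
    | zero => rfl
    | succ n ih =>
      show op g (opPow op g (n + 1)) = op (opPow op g (n + 1)) g
      conv_lhs => rw [ih]
      rw [← hassoc g hgC _ (hQC n) g hgC]
      rfl
  -- key : f^(n+1) * g^(n+1) = e
  have hkey : ∀ n, op (opPow op f n) (opPow op g n) = e := by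
    intro n; induction n with
    | zero => exact hfg
    | succ n ih =>
      show op (op f (opPow op f n)) (opPow op g (n + 1)) = e
      rw [hQright n, hassoc f hfC _ (hPC n)
        _ (closure_mono (fun x hx => hx) (subset_closure (hgenop _ (hQgen n) g hgeng))),
        ← hassoc _ (hPC n) _ (hQC n) g hgC, ih, (hid g hgC).1, hfg]
  -- power addition
  have hPadd : ∀ a b, opPow op f (a + b + 1) = op (opPow op f a) (opPow op f b) := by
    intro a b; induction a with
    | zero => rw [Nat.zero_add]; rfl
    | succ a ih =>
      have hn : a + 1 + b + 1 = (a + b + 1) + 1 := by omega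
      rw [hn]
      show op f (opPow op f (a + b + 1)) = op (op f (opPow op f a)) (opPow op f b)
      rw [ih, ← hassoc f hfC _ (hPC a) _ (hPC b)]
  -- extract convergent subsequences
  obtain ⟨F, -, φ, hφ, hF⟩ :=
    isCompact_univ.tendsto_subseq (fun n => Set.mem_univ (opPow op f n))
  obtain ⟨G, -, ψ, hψ, hG⟩ :=
    isCompact_univ.tendsto_subseq (fun n => Set.mem_univ (opPow op g (φ n)))
  set χ : ℕ → ℕ := φ ∘ ψ with hχ
  have hχmono : StrictMono χ := hφ.comp hψ
  have hFχ : Tendsto (fun r => opPow op f (χ r)) atTop (𝓝 F) :=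
    hF.comp hψ.tendsto_atTop
  have hGχ : Tendsto (fun r => opPow op g (χ r)) atTop (𝓝 G) := hG
  -- op F G = e
  have hFG : op F G = e := by
    have h1 : Tendsto (fun r => op (opPow op f (χ r)) (opPow op g (χ r)))
        atTop (𝓝 (op F G)) := hlim _ _ _ _ hFχ hGχ
    have h2 : (fun r => op (opPow op f (χ r)) (opPow op g (χ r))) = fun _ => e := by
      funext r; exact hkey (χ r)
    rw [h2] at h1
    exact (tendsto_nhds_unique tendsto_const_nhds h1).symm
  refine ⟨fun r => χ r + 1, fun a b hab => by simpa using hχmono hab,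
    fun r => Nat.succ_pos _, ?_⟩
  have heq : ∀ r, opPow op f ((χ (r + 1) + 1) - (χ r + 1) - 1)
      = op (opPow op f (χ (r + 1))) (opPow op g (χ r)) := by
    intro r
    have hlt : χ r < χ (r + 1) := hχmono (Nat.lt_succ_self r)
    set m := χ r; set n := χ (r + 1)
    have hn : n = (n - m - 1) + m + 1 := by omega
    have : opPow op f n = op (opPow op f (n - m - 1)) (opPow op f m) := by
      conv_lhs => rw [hn]
      exact hPadd _ _
    rw [this, hassoc _ (hPC _) _ (hPC m) _ (hQC m), hkey m, (hid _ (hPC _)).2]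
    congr 1
    omega
  have hshift : Tendsto (fun r => opPow op f (χ (r + 1))) atTop (𝓝 F) :=
    hFχ.comp (tendsto_add_atTop_nat 1)
  have hfin : Tendsto (fun r => op (opPow op f (χ (r + 1))) (opPow op g (χ r)))
      atTop (𝓝 e) := by
    have := hlim _ _ _ _ hshift hGχ
    rwa [hFG] at this
  refine hfin.congr ?_
  intro r
  exact (heq r).symm
end

section
/- Let X = ℝⁿ with n ≥ 1, let H be the group of homeomorphisms of X onto itself, and let d_H be any metric on H such that convergence of a sequence (h_i) to the identity in (H, d_H) implies pointwise convergence of (h_i) to the identity. Then there is no compact metric space (K, d_K) with an operation • : K × K → K such that: (1) K ⊇ H; (2) d_K restricted to H equals d_H; (3) f • g = f ∘ g for all f, g ∈ H; (4) whenever (ρ_i) and (σ_i) converge in K, the sequence (ρ_i • σ_i) converges and lim(ρ_i • σ_i) = (lim ρ_i) • (lim σ_i). -/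
open Filter Topology Function

/-- main theorem for `X = ℝⁿ`, `n ≥ 1`. Let `H` be the group of
self-homeomorphisms of `ℝⁿ` with a metric `d_H` such that `d_H`-convergence to
the identity implies pointwise convergence to the identity. Then there is no
compact metric space `K` containing `H` (via an injection `φ`), whose metric
extends `d_H`, with a binary operation `•` extending composition of
homeomorphisms and commuting with limits of convergent sequences. -/
theorem statement6 {n : ℕ} (hn : 1 ≤ n)
    (dH : (EuclideanSpace ℝ (Fin n) ≃ₜ EuclideanSpace ℝ (Fin n)) →
          (EuclideanSpace ℝ (Fin n) ≃ₜ EuclideanSpace ℝ (Fin n)) → ℝ)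
    (hdH : ∀ h : ℕ → (EuclideanSpace ℝ (Fin n) ≃ₜ EuclideanSpace ℝ (Fin n)),
      Tendsto (fun i => dH (h i) (Homeomorph.refl (EuclideanSpace ℝ (Fin n))))
        atTop (𝓝 0) →
      ∀ x : EuclideanSpace ℝ (Fin n), Tendsto (fun i => h i x) atTop (𝓝 x))
    (K : Type*) [MetricSpace K] [CompactSpace K]
    (φ : (EuclideanSpace ℝ (Fin n) ≃ₜ EuclideanSpace ℝ (Fin n)) → K)
    (hφ : Function.Injective φ)
    (hext : ∀ f g, dist (φ f) (φ g) = dH f g)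
    (op : K → K → K)
    (hop : ∀ f g, op (φ f) (φ g) = φ (g.trans f))
    (hlim : ∀ (ρ σ : ℕ → K) (ρ₀ σ₀ : K), Tendsto ρ atTop (𝓝 ρ₀) →
      Tendsto σ atTop (𝓝 σ₀) →
      Tendsto (fun i => op (ρ i) (σ i)) atTop (𝓝 (op ρ₀ σ₀))) :
    False := by
  classical
  set X := EuclideanSpace ℝ (Fin n)
  -- F i : scaling by (1/2)^i, G i : scaling by 2^i
  have h2 : (2:ℝ) ≠ 0 := two_ne_zero
  have hhalf : ∀ i : ℕ, ((2:ℝ)⁻¹ ^ i) ≠ 0 := fun i => pow_ne_zero _ (inv_ne_zero h2)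
  have hdbl : ∀ i : ℕ, ((2:ℝ) ^ i) ≠ 0 := fun i => pow_ne_zero _ h2
  set F : ℕ → (X ≃ₜ X) := fun i => Homeomorph.smulOfNeZero ((2:ℝ)⁻¹ ^ i) (hhalf i)
  set G : ℕ → (X ≃ₜ X) := fun i => Homeomorph.smulOfNeZero ((2:ℝ) ^ i) (hdbl i)
  have hFapp : ∀ i (x : X), F i x = ((2:ℝ)⁻¹ ^ i) • x := fun i x => rfl
  have hGapp : ∀ i (x : X), G i x = ((2:ℝ) ^ i) • x := fun i x => rfl
  -- composition rule
  have hcomp : ∀ a b : ℕ, a ≤ b → (G a).trans (F b) = F (b - a) := by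
    intro a b hab
    refine Homeomorph.ext fun x => ?_
    show ((2:ℝ)⁻¹ ^ b) • (((2:ℝ) ^ a) • x) = ((2:ℝ)⁻¹ ^ (b - a)) • x
    rw [smul_smul]
    congr 1
    rw [pow_sub₀ _ (inv_ne_zero h2) hab]
    field_simp
    rw [← mul_pow]; norm_num
  have hF0 : F 0 = Homeomorph.refl X := by
    refine Homeomorph.ext fun x => ?_
    show ((2:ℝ)⁻¹ ^ 0) • x = x
    simp
  -- extract a convergent subsequence of (φ (F i), φ (G i)) in K × K
  obtain ⟨⟨ρ₀, σ₀⟩, ψ, hψ, hconv⟩ :=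
    CompactSpace.tendsto_subseq (X := K × K) (fun i => (φ (F i), φ (G i)))
  have hρ : Tendsto (fun r => φ (F (ψ r))) atTop (𝓝 ρ₀) :=
    (continuous_fst.tendsto _).comp hconv
  have hσ : Tendsto (fun r => φ (G (ψ r))) atTop (𝓝 σ₀) :=
    (continuous_snd.tendsto _).comp hconv
  have hρ' : Tendsto (fun r => φ (F (ψ (r + 1)))) atTop (𝓝 ρ₀) :=
    hρ.comp (tendsto_add_atTop_nat 1)
  -- two limits
  have hlim1 : Tendsto (fun r => op (φ (F (ψ (r+1)))) (φ (G (ψ r)))) atTop (𝓝 (op ρ₀ σ₀)) :=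
    hlim _ _ _ _ hρ' hσ
  have hlim2 : Tendsto (fun r => op (φ (F (ψ r))) (φ (G (ψ r)))) atTop (𝓝 (op ρ₀ σ₀)) :=
    hlim _ _ _ _ hρ hσ
  have heq2 : ∀ r, op (φ (F (ψ r))) (φ (G (ψ r))) = φ (Homeomorph.refl X) := by
    intro r
    rw [hop, hcomp _ _ le_rfl, Nat.sub_self, hF0]
  have hρσ : op ρ₀ σ₀ = φ (Homeomorph.refl X) := by
    exact tendsto_nhds_unique hlim2 (by simpa only [heq2] using (tendsto_const_nhds : Tendsto (fun _ : ℕ => φ (Homeomorph.refl X)) atTop _))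
  -- so φ (F (m r)) → φ (refl), where m r = ψ (r+1) - ψ r ≥ 1
  have hm : ∀ r, 1 ≤ ψ (r+1) - ψ r := fun r => by
    have := hψ (show r < r + 1 by omega); omega
  have heq1 : ∀ r, op (φ (F (ψ (r+1)))) (φ (G (ψ r))) = φ (F (ψ (r+1) - ψ r)) := by
    intro r
    rw [hop, hcomp _ _ (le_of_lt (hψ (Nat.lt_succ_self r)))]
  have hlim1' : Tendsto (fun r => φ (F (ψ (r+1) - ψ r))) atTop (𝓝 (φ (Homeomorph.refl X))) := by
    rw [← hρσ]
    simpa [heq1] using hlim1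
  -- convert to dH convergence, then pointwise convergence
  have hdist : Tendsto (fun r => dH (F (ψ (r+1) - ψ r)) (Homeomorph.refl X)) atTop (𝓝 0) := by
    have := (tendsto_iff_dist_tendsto_zero).mp hlim1'
    simpa [hext] using this
  -- pick a unit vector
  set x₀ : X := EuclideanSpace.single (⟨0, hn⟩ : Fin n) (1:ℝ)
  have hx₀ : ‖x₀‖ = 1 := by
    show ‖EuclideanSpace.single (⟨0, hn⟩ : Fin n) (1:ℝ)‖ = 1
    rw [EuclideanSpace.norm_single]; norm_num
  have hpt : Tendsto (fun r => F (ψ (r+1) - ψ r) x₀) atTop (𝓝 x₀) :=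
    hdH _ hdist x₀
  -- but each term is far from x₀
  have hfar : ∀ r, (1:ℝ)/2 ≤ dist (F (ψ (r+1) - ψ r) x₀) x₀ := by
    intro r
    set m := ψ (r+1) - ψ r
    rw [hFapp, dist_eq_norm]
    have hre : ((2:ℝ)⁻¹ ^ m) • x₀ - x₀ = (((2:ℝ)⁻¹ ^ m) - 1) • x₀ := by
      rw [sub_smul, one_smul]
    have h1 : ((2:ℝ)⁻¹) ^ m ≤ (2:ℝ)⁻¹ ^ 1 :=
      pow_le_pow_of_le_one (by norm_num) (by norm_num) (hm r)
    have h0 : (0:ℝ) < (2:ℝ)⁻¹ ^ m := by positivity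
    simp only [pow_one] at h1
    rw [hre, norm_smul, hx₀, mul_one, Real.norm_eq_abs, abs_sub_comm,
      abs_of_nonneg (by linarith)]
    linarith
  have : Tendsto (fun r => dist (F (ψ (r+1) - ψ r) x₀) x₀) atTop (𝓝 0) :=
    (tendsto_iff_dist_tendsto_zero).mp hpt
  have hsmall := (this.eventually (gt_mem_nhds (by norm_num : (0:ℝ) < 1/2))).exists
  obtain ⟨r, hr⟩ := hsmall
  exact absurd (hfar r) (by linarith)
end

section
/- Let H be the set of homeomorphisms of a topological space X, with a metric d_H such that d_H-convergence to id_X implies pointwise convergence to id_X. Suppose there exists h ∈ H such that no sequence of positive iterates (h^{m_r}) converges pointwise to id_X. Then (H, d_H) cannot be isometrically embedded into a compact metric space (K, d_K) carrying a limit-continuous binary operation extending composition on H. -/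
open Filter Topology Function

/-- Iterates of a homeomorphism as homeomorphisms. -/
def hpow {X : Type*} [TopologicalSpace X] (h : X ≃ₜ X) : ℕ → (X ≃ₜ X)
  | 0 => Homeomorph.refl X
  | n + 1 => (hpow h n).trans h

lemma hpow_coe {X : Type*} [TopologicalSpace X] (h : X ≃ₜ X) :
    ∀ n x, hpow h n x = (⇑h)^[n] x := by
  intro n
  induction n with
  | zero => intro x; rfl
  | succ n ih =>
    intro x
    simp only [hpow, Homeomorph.trans_apply, ih, Function.iterate_succ_apply']

lemma hIterCancel {X : Type*} [TopologicalSpace X] (h : X ≃ₜ X) :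
    ∀ n x, (⇑h)^[n] ((⇑h.symm)^[n] x) = x := by
  intro n
  induction n with
  | zero => intro x; rfl
  | succ n ih =>
    intro x
    rw [Function.iterate_succ_apply' (⇑h.symm), Function.iterate_succ_apply (⇑h),
      Homeomorph.apply_symm_apply, ih]

lemma hpow_key {X : Type*} [TopologicalSpace X] (h : X ≃ₜ X) (m b : ℕ) :
    (hpow h b).symm.trans (hpow h (m + b)) = hpow h m := by
  ext x
  simp only [Homeomorph.trans_apply, hpow_coe]
  have hs : (hpow h b).symm x = (⇑h.symm)^[b] x := by
    apply (hpow h b).injective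
    rw [Homeomorph.apply_symm_apply, hpow_coe, hIterCancel]
  rw [hs, Function.iterate_add_apply, hIterCancel]

/-- let `H` be the homeomorphism group of a topological space
`X` with a metric `d_H` such that `d_H`-convergence to the identity implies
pointwise convergence to the identity. If some `h ∈ H` has no sequence of
positive iterates converging pointwise to the identity, then `(H, d_H)` cannot
be isometrically embedded into a compact metric space `K` carrying a
limit-continuous binary operation extending composition on `H`. -/
theorem statement12 {X : Type*} [TopologicalSpace X]
    (dH : (X ≃ₜ X) → (X ≃ₜ X) → ℝ)
    (hdH : ∀ h : ℕ → (X ≃ₜ X),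
      Tendsto (fun i => dH (h i) (Homeomorph.refl X)) atTop (𝓝 0) →
      ∀ x : X, Tendsto (fun i => h i x) atTop (𝓝 x))
    (h : X ≃ₜ X)
    (hh : ∀ m : ℕ → ℕ, (∀ r, 1 ≤ m r) →
      ¬ (∀ x : X, Tendsto (fun r => (⇑h)^[m r] x) atTop (𝓝 x)))
    (K : Type*) [MetricSpace K] [CompactSpace K]
    (φ : (X ≃ₜ X) → K) (hφ : Function.Injective φ)
    (hext : ∀ f g : X ≃ₜ X, dist (φ f) (φ g) = dH f g)
    (op : K → K → K)
    (hop : ∀ f g : X ≃ₜ X, op (φ f) (φ g) = φ (g.trans f))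
    (hlim : ∀ (ρ σ : ℕ → K) (ρ₀ σ₀ : K), Tendsto ρ atTop (𝓝 ρ₀) →
      Tendsto σ atTop (𝓝 σ₀) →
      Tendsto (fun i => op (ρ i) (σ i)) atTop (𝓝 (op ρ₀ σ₀))) :
    False := by
  -- the sequence n ↦ (φ (h^n), φ (h^{-n})) in the compact space K × K
  set x : ℕ → K × K := fun n => (φ (hpow h n), φ ((hpow h n).symm)) with hxdef
  obtain ⟨pq, -, ψ, hψmono, hψlim⟩ :=
    isCompact_univ.tendsto_subseq (x := x) (fun n => Set.mem_univ _)
  obtain ⟨p, q⟩ := pq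
  have hρ : Tendsto (fun r => φ (hpow h (ψ (r + 1)))) atTop (𝓝 p) := by
    have h1 : Tendsto (fun r => x (ψ (r + 1))) atTop (𝓝 (p, q)) :=
      hψlim.comp (tendsto_add_atTop_nat 1)
    exact (continuous_fst.tendsto _).comp h1
  have hσ : Tendsto (fun r => φ ((hpow h (ψ r)).symm)) atTop (𝓝 q) :=
    (continuous_snd.tendsto _).comp hψlim
  have hσ' : Tendsto (fun r => φ (hpow h (ψ r))) atTop (𝓝 p) :=
    (continuous_fst.tendsto _).comp hψlim
  set m : ℕ → ℕ := fun r => ψ (r + 1) - ψ r with hmdef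
  have hm1 : ∀ r, 1 ≤ m r := fun r =>
    by have := hψmono (show r < r + 1 by omega); simp only [hmdef]; omega
  have hadd : ∀ r, m r + ψ r = ψ (r + 1) := fun r =>
    Nat.sub_add_cancel (le_of_lt (hψmono (Nat.lt_succ_self r)))
  -- op (φ (h^{ψ(r+1)})) (φ (h^{-ψ r})) = φ (h^{m r})
  have key : ∀ r, op (φ (hpow h (ψ (r + 1)))) (φ ((hpow h (ψ r)).symm))
      = φ (hpow h (m r)) := by
    intro r
    rw [hop, ← hadd r, hpow_key]
  -- limit of φ (h^{m r}) is op p q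
  have lim1 : Tendsto (fun r => φ (hpow h (m r))) atTop (𝓝 (op p q)) := by
    have := hlim _ _ p q hρ hσ
    simpa only [key] using this
  -- but also op (φ (h^{ψ r})) (φ (h^{-ψ r})) = φ refl, constant, tends to op p q
  have key2 : ∀ r, op (φ (hpow h (ψ r))) (φ ((hpow h (ψ r)).symm))
      = φ (Homeomorph.refl X) := by
    intro r
    rw [hop]
    congr 1
    ext y
    simp
  have lim2 : Tendsto (fun _ : ℕ => φ (Homeomorph.refl X)) atTop (𝓝 (op p q)) := by
    have := hlim _ _ p q hσ' hσ
    simpa only [key2] using this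
  have hpq : op p q = φ (Homeomorph.refl X) :=
    tendsto_nhds_unique lim2 tendsto_const_nhds
  rw [hpq] at lim1
  -- hence dH (h^{m r}) id → 0
  have hdist : Tendsto (fun r => dH (hpow h (m r)) (Homeomorph.refl X)) atTop (𝓝 0) := by
    have := (tendsto_iff_dist_tendsto_zero).mp lim1
    simpa only [hext] using this
  have hpt := hdH _ hdist
  refine hh m hm1 ?_
  intro y
  have := hpt y
  simpa only [hpow_coe] using this
end
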